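/- Let d ≥ 1 and let y : [0,T) → ℝ be a solution of y^{(d+1)} = y · y^{(d)} with y(0) = ⋯ = y^{(d-1)}(0) = 0 and y^{(d)}(0) = 1. Then y(t) ≥ 0, y'(t) ≥ 0, ..., y^{(d-1)}(t) ≥ 0 and y^{(d)}(t) ≥ 1 for all t ∈ [0,T). -/

import Mathlib

open Set Filter

/-- absolute monotonicity bounds for a solution of
y^{(d+1)} = y·y^{(d)} with zero initial conditions up to order d−1 and
y^{(d)}(0) = 1. -/
theorem stmt_2 (d : ℕ) (hd : 1 ≤ d) (T : ℝ) (hT : 0 < T) (y : ℝ → ℝ)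
    (hy : ContDiff ℝ (d + 1) y)
    (hode : ∀ t ∈ Ico (0 : ℝ) T,
      iteratedDeriv (d + 1) y t = y t * iteratedDeriv d y t)
    (hic : ∀ i < d, iteratedDeriv i y 0 = 0)
    (hicd : iteratedDeriv d y 0 = 1) :
    ∀ t ∈ Ico (0 : ℝ) T,
      (∀ i < d, 0 ≤ iteratedDeriv i y t) ∧ 1 ≤ iteratedDeriv d y t := by
  set u : ℝ → ℝ := iteratedDeriv d y with hu
  have hy_cont : Continuous y := by
    have := hy.continuous_iteratedDeriv 0 (by exact_mod_cast Nat.zero_le _)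
    simpa [iteratedDeriv_zero] using this
  have hu_diff : Differentiable ℝ u :=
    hy.differentiable_iteratedDeriv d (by exact_mod_cast Nat.lt_succ_self d)
  have hderiv_u : ∀ x ∈ Ico (0:ℝ) T, deriv u x = y x * u x := by
    intro x hx
    have h1 : deriv u x = iteratedDeriv (d + 1) y x := by
      rw [iteratedDeriv_succ]
    rw [h1, hode x hx]
  set Y : ℝ → ℝ := fun t => ∫ s in (0:ℝ)..t, y s with hYdef
  have hY_deriv : ∀ x : ℝ, HasDerivAt Y (y x) x := by
    intro x
    exact intervalIntegral.integral_hasDerivAt_right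
      (hy_cont.intervalIntegrable 0 x)
      (hy_cont.aestronglyMeasurable.stronglyMeasurableAtFilter)
      hy_cont.continuousAt
  have hY_cont : Continuous Y :=
    (Differentiable.continuous (fun x => (hY_deriv x).differentiableAt))
  -- key : u t = exp (Y t) on Ico 0 T
  have hkey : ∀ t ∈ Ico (0:ℝ) T, u t = Real.exp (Y t) := by
    intro t ht
    set g : ℝ → ℝ := fun x => u x * Real.exp (-Y x) with hg
    have hgderiv : ∀ x ∈ Ico (0:ℝ) t, HasDerivWithinAt g 0 (Ici x) x := by
      intro x hx
      have hxT : x ∈ Ico (0:ℝ) T := ⟨hx.1, lt_trans hx.2 ht.2⟩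
      have h1 : HasDerivAt u (deriv u x) x := (hu_diff x).hasDerivAt
      have h2 : HasDerivAt (fun x => Real.exp (-Y x)) (Real.exp (-Y x) * (-(y x))) x :=
        ((hY_deriv x).neg).exp
      have h3 : HasDerivAt g
          (deriv u x * Real.exp (-Y x) + u x * (Real.exp (-Y x) * (-(y x)))) x := h1.mul h2
      have h4 : deriv u x * Real.exp (-Y x) + u x * (Real.exp (-Y x) * (-(y x))) = 0 := by
        rw [hderiv_u x hxT]; ring
      rw [h4] at h3
      exact h3.hasDerivWithinAt
    have hgcont : ContinuousOn g (Icc 0 t) :=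
      (hu_diff.continuous.mul (hY_cont.neg.rexp)).continuousOn
    have hconst := constant_of_has_deriv_right_zero hgcont hgderiv t (right_mem_Icc.mpr ht.1)
    have hg0 : g 0 = 1 := by
      simp [hg, hYdef, intervalIntegral.integral_same, hicd]
    rw [hg0] at hconst
    have h5 : u t * Real.exp (-Y t) = 1 := hconst
    have h6 : u t * Real.exp (-Y t) * Real.exp (Y t) = 1 * Real.exp (Y t) := by rw [h5]
    rwa [mul_assoc, ← Real.exp_add, neg_add_cancel, Real.exp_zero, mul_one, one_mul] at h6
  -- cascade of nonnegativity
  have hcasc : ∀ j, j ≤ d → ∀ t ∈ Ico (0:ℝ) T, 0 ≤ iteratedDeriv (d - j) y t := by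
    intro j
    induction j with
    | zero =>
      intro _ t ht
      rw [Nat.sub_zero]
      rw [show iteratedDeriv d y t = u t from rfl, hkey t ht]
      exact (Real.exp_pos _).le
    | succ j ih =>
      intro hj t ht
      have hjd : j ≤ d := Nat.le_of_succ_le hj
      set f : ℝ → ℝ := iteratedDeriv (d - (j + 1)) y with hf
      have hidx : d - (j + 1) + 1 = d - j := by omega
      have hf0 : f 0 = 0 := hic _ (by omega)
      have hfc : Continuous f :=
        hy.continuous_iteratedDeriv _ (by exact_mod_cast le_trans (Nat.sub_le d _) (Nat.le_succ d))
      have hfd : Differentiable ℝ f :=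
        hy.differentiable_iteratedDeriv _ (by exact_mod_cast Nat.lt_succ_of_le (Nat.sub_le d _))
      have hmono : MonotoneOn f (Icc 0 t) := by
        apply monotoneOn_of_deriv_nonneg (convex_Icc 0 t) hfc.continuousOn
          (hfd.differentiableOn)
        intro x hx
        rw [interior_Icc] at hx
        have hxT : x ∈ Ico (0:ℝ) T := ⟨hx.1.le, lt_trans hx.2 ht.2⟩
        have : deriv f x = iteratedDeriv (d - j) y x := by
          rw [hf, ← iteratedDeriv_succ, hidx]
        rw [this]
        exact ih hjd x hxT
      have := hmono (left_mem_Icc.mpr ht.1) (right_mem_Icc.mpr ht.1) ht.1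
      rw [hf0] at this
      exact this
  intro t ht
  constructor
  · intro i hi
    have := hcasc (d - i) (Nat.sub_le d i) t ht
    rwa [Nat.sub_sub_self hi.le] at this
  · rw [hkey t ht]
    apply Real.one_le_exp
    apply intervalIntegral.integral_nonneg ht.1
    intro x hx
    have hxT : x ∈ Ico (0:ℝ) T := ⟨hx.1, lt_of_le_of_lt hx.2 ht.2⟩
    have := hcasc d le_rfl x hxT
    rwa [Nat.sub_self, iteratedDeriv_zero] at this
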